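/- For all natural numbers n ≥ 1 and m ≥ 3, the broadcast domination number of the sunlet graph with degree n, S_m^n, equals n + ⌊m/2⌋. -/

import Mathlib

open SimpleGraph Finset

/-- A dominating broadcast on `G`: every vertex is within distance `f u` of some
vertex `u` with `f u ≥ 1` (distances are measured by the graph metric `G.dist`). -/
def IsDominatingBroadcast {V : Type*} (G : SimpleGraph V) (f : V → ℕ) : Prop :=
  ∀ v : V, ∃ u : V, 1 ≤ f u ∧ G.dist u v ≤ f u

/-- The broadcast domination number of `G`: the minimum cost (sum of strengths)
of a dominating broadcast on `G`. -/
noncomputable def gammaB (V : Type*) [Fintype V] (G : SimpleGraph V) : ℕ :=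
  sInf {c : ℕ | ∃ f : V → ℕ, IsDominatingBroadcast G f ∧ ∑ v, f v = c}

/-- The sunlet graph with degree `n` on the cycle `C_m`, `S_m^n`: a path on `n`
new vertices (a branch) is attached to each vertex of the cycle `C_m`.
The vertex `(i, 0)` is the `i`-th base vertex (on the cycle) and, for
`1 ≤ j ≤ n`, the vertex `(i, j)` is the `j`-th pendant vertex of the branch
attached at `(i, 0)`. -/
def sunletDeg (m n : ℕ) : SimpleGraph (Fin m × Fin (n + 1)) :=
  SimpleGraph.fromRel (fun a b =>
    (a.2 = 0 ∧ b.2 = 0 ∧ (SimpleGraph.cycleGraph m).Adj a.1 b.1) ∨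
    (a.1 = b.1 ∧ (a.2 : ℕ) + 1 = (b.2 : ℕ)))

namespace SP

/-- cyclic distance on `Fin m` -/
def dC {m : ℕ} (q i : Fin m) : ℕ := min ((i - q).val) ((q - i).val)

def dabs (a b : ℕ) : ℕ := (a - b) + (b - a)

variable {M n : ℕ}

lemma sub_val_spec (a b : Fin (M + 3)) :
    (a - b).val = if b.val ≤ a.val then a.val - b.val else a.val + (M + 3) - b.val := by
  have hb := b.isLt
  have ha := a.isLt
  rw [Fin.sub_def]
  simp only
  split_ifs with h
  · have e : (M + 3) - b.val + a.val = (M + 3) + (a.val - b.val) := by omega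
    rw [e, Nat.add_mod_left, Nat.mod_eq_of_lt (by omega)]
  · rw [Nat.mod_eq_of_lt (by omega)]
    omega

lemma add_one_val (i : Fin (M + 3)) :
    (i + 1).val = if i.val + 1 = M + 3 then 0 else i.val + 1 := by
  rw [Fin.add_def]
  simp only [Fin.val_one]
  split_ifs with h
  · simp [h]
  · exact Nat.mod_eq_of_lt (by omega)

lemma dC_self (q : Fin (M + 3)) : dC q q = 0 := by
  simp [dC, sub_val_spec]

lemma dC_comm (q i : Fin (M + 3)) : dC q i = dC i q := by
  simp [dC]; omega

lemma dC_eq_zero_iff (q i : Fin (M + 3)) : dC q i = 0 ↔ q = i := by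
  rw [Fin.ext_iff]
  have h1 := sub_val_spec q i
  have h2 := sub_val_spec i q
  have b1 := q.isLt
  have b2 := i.isLt
  simp only [dC]
  split_ifs at h1 h2 <;> omega

lemma dC_le_half (q i : Fin (M + 3)) : dC q i ≤ (M + 3) / 2 := by
  have h1 := sub_val_spec q i
  have h2 := sub_val_spec i q
  have b1 := q.isLt
  have b2 := i.isLt
  simp only [dC]
  split_ifs at h1 h2 <;> omega

lemma dC_tri (q p i : Fin (M + 3)) : dC q i ≤ dC q p + dC p i := by
  have h1 := sub_val_spec i q
  have h2 := sub_val_spec q i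
  have h3 := sub_val_spec p q
  have h4 := sub_val_spec q p
  have h5 := sub_val_spec i p
  have h6 := sub_val_spec p i
  have b1 := q.isLt; have b2 := i.isLt; have b3 := p.isLt
  simp only [dC]
  split_ifs at h1 h2 h3 h4 h5 h6 <;> omega

lemma dC_succ (i : Fin (M + 3)) : dC i (i + 1) = 1 := by
  have h1 := sub_val_spec (i + 1) i
  have h2 := sub_val_spec i (i + 1)
  have h3 := add_one_val i
  have b1 := i.isLt
  simp only [dC]
  split_ifs at h1 h2 h3 <;> omega

lemma succ_ne (i : Fin (M + 3)) : i + 1 ≠ i := by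
  intro h
  have h2 := dC_succ i
  rw [h, dC_self] at h2
  omega

lemma sub_one_val (i : Fin (M + 3)) :
    (i - 1).val = if i.val = 0 then M + 2 else i.val - 1 := by
  have := sub_val_spec i (1 : Fin (M + 3))
  have h1 : (1 : Fin (M + 3)).val = 1 := by simp
  rw [this]
  split_ifs <;> omega

/-- decreasing step towards q -/
lemma dC_step (q p : Fin (M + 3)) (h : q ≠ p) :
    ∃ p', dC p p' = 1 ∧ dC q p' + 1 = dC q p := by
  have hd : dC q p ≠ 0 := fun hc => h ((dC_eq_zero_iff q p).mp hc)
  have b1 := q.isLt; have b2 := p.isLt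
  have hqp := sub_val_spec p q
  have hpq := sub_val_spec q p
  by_cases hdir : (p - q).val ≤ (q - p).val
  · refine ⟨p - 1, ?_, ?_⟩
    · have h1 := sub_val_spec p (p - 1)
      have h2 := sub_val_spec (p - 1) p
      have h3 := sub_one_val p
      have b3 := (p - 1).isLt
      simp only [dC]
      split_ifs at h1 h2 h3 <;> omega
    · have h1 := sub_val_spec (p - 1) q
      have h2 := sub_val_spec q (p - 1)
      have h3 := sub_one_val p
      have b3 := (p - 1).isLt
      simp only [dC] at hd ⊢
      split_ifs at h1 h2 h3 hqp hpq <;> omega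
  · refine ⟨p + 1, ?_, ?_⟩
    · have h1 := sub_val_spec p (p + 1)
      have h2 := sub_val_spec (p + 1) p
      have h3 := add_one_val p
      have b3 := (p + 1).isLt
      simp only [dC]
      split_ifs at h1 h2 h3 <;> omega
    · have h1 := sub_val_spec (p + 1) q
      have h2 := sub_val_spec q (p + 1)
      have h3 := add_one_val p
      have b3 := (p + 1).isLt
      simp only [dC] at hd ⊢
      split_ifs at h1 h2 h3 hqp hpq <;> omega


lemma dC_ball (q : Fin (M + 3)) (s : ℕ) :
    ((univ : Finset (Fin (M + 3))).filter (fun i => dC q i ≤ s)).card ≤ 2 * s + 1 := by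
  classical
  have hsub : ∀ a ∈ (univ : Finset (Fin (M + 3))).filter (fun i => dC q i ≤ s),
      (a - q).val ∈ (Finset.range (s + 1)) ∪ (Finset.Icc (M + 3 - s) (M + 2)) := by
    intro a ha
    simp only [mem_filter, mem_univ, true_and] at ha
    have h1 := sub_val_spec a q
    have h2 := sub_val_spec q a
    have b1 := a.isLt; have b2 := q.isLt
    simp only [dC] at ha
    simp only [Finset.mem_union, Finset.mem_range, Finset.mem_Icc]
    split_ifs at h1 h2 <;> omega
  have hinj : ∀ a ∈ (univ : Finset (Fin (M+3))).filter (fun i => dC q i ≤ s),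
      ∀ b ∈ (univ : Finset (Fin (M+3))).filter (fun i => dC q i ≤ s),
      (a - q).val = (b - q).val → a = b := by
    intro a _ b _ hab
    have h1 := sub_val_spec a q
    have h2 := sub_val_spec b q
    have b1 := a.isLt; have b2 := b.isLt; have b3 := q.isLt
    rw [Fin.ext_iff]
    split_ifs at h1 h2 <;> omega
  have hcard := Finset.card_le_card_of_injOn _ hsub hinj
  calc ((univ : Finset (Fin (M+3))).filter (fun i => dC q i ≤ s)).card
      ≤ ((Finset.range (s + 1)) ∪ (Finset.Icc (M + 3 - s) (M + 2))).card := hcard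
    _ ≤ (Finset.range (s+1)).card + (Finset.Icc (M + 3 - s) (M + 2)).card :=
        Finset.card_union_le _ _
    _ ≤ 2 * s + 1 := by
        rw [Finset.card_range, Nat.card_Icc]
        omega

lemma cyc_adj_iff (a b : Fin (M + 3)) :
    (cycleGraph (M + 3)).Adj a b ↔ dC a b = 1 := by
  rw [cycleGraph_adj']
  have h1 := sub_val_spec a b
  have h2 := sub_val_spec b a
  have b1 := a.isLt; have b2 := b.isLt
  simp only [dC]
  constructor
  · rintro (h | h) <;> split_ifs at h1 h2 <;> omega
  · intro h
    split_ifs at h1 h2 <;> omega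


/-- potential/distance formula -/
def D (u v : Fin (M + 3) × Fin (n + 1)) : ℕ :=
  if u.1 = v.1 then dabs u.2.val v.2.val else u.2.val + v.2.val + dC u.1 v.1

lemma adj_branch (i : Fin (M + 3)) (a b : Fin (n + 1)) (h : a.val + 1 = b.val) :
    (sunletDeg (M + 3) n).Adj (i, a) (i, b) := by
  rw [sunletDeg, fromRel_adj]
  refine ⟨?_, Or.inl (Or.inr ⟨rfl, h⟩)⟩
  intro hc
  have : a.val = b.val := by
    have := congrArg (fun p => (Prod.snd p).val) hc
    simpa using this
  omega

lemma adj_base {i i' : Fin (M + 3)} (h : (cycleGraph (M + 3)).Adj i i') :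
    (sunletDeg (M + 3) n).Adj (i, (0 : Fin (n+1))) (i', (0 : Fin (n+1))) := by
  rw [sunletDeg, fromRel_adj]
  refine ⟨?_, Or.inl (Or.inl ⟨rfl, rfl, h⟩)⟩
  intro hc
  exact h.ne (congrArg Prod.fst hc)

/-- walk up a branch -/
lemma branch_walk (i : Fin (M + 3)) (a b : Fin (n + 1)) (hab : a.val ≤ b.val) :
    ∃ w : (sunletDeg (M + 3) n).Walk (i, a) (i, b), w.length = b.val - a.val := by
  obtain ⟨k, hk⟩ : ∃ k, a.val + k = b.val := ⟨b.val - a.val, by omega⟩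
  induction k generalizing b with
  | zero =>
    have : a = b := Fin.ext (by omega)
    subst this
    exact ⟨Walk.nil, by simp⟩
  | succ k ih =>
    have hbk : a.val + k < n + 1 := by have := b.isLt; omega
    have hb'lt : a.val + k < n + 1 := hbk
    obtain ⟨w, hw⟩ := ih ⟨a.val + k, hb'lt⟩ (by simp) (by simp)
    have hadj : (sunletDeg (M + 3) n).Adj (i, ⟨a.val + k, hb'lt⟩) (i, b) :=
      adj_branch i _ b (by simp; omega)
    refine ⟨w.concat hadj, ?_⟩
    rw [Walk.length_concat, hw]
    simp
    omega

/-- walk around the cycle between base vertices -/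
lemma base_walk (q i : Fin (M + 3)) :
    ∃ w : (sunletDeg (M + 3) n).Walk (q, (0 : Fin (n+1))) (i, (0 : Fin (n+1))),
      w.length = dC q i := by
  generalize hd : dC q i = d
  induction d generalizing i with
  | zero =>
    obtain rfl := (dC_eq_zero_iff q i).mp hd
    exact ⟨Walk.nil, rfl⟩
  | succ d ih =>
    have hne : q ≠ i := by
      intro h; subst h; rw [dC_self] at hd; omega
    obtain ⟨p', h1, h2⟩ := dC_step q i hne
    obtain ⟨w, hw⟩ := ih p' (by omega)
    have hadj : (sunletDeg (M + 3) n).Adj (p', (0:Fin (n+1))) (i, (0:Fin (n+1))) :=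
      adj_base ((cyc_adj_iff p' i).mpr (by rw [dC_comm] at h1; exact h1))
    refine ⟨w.concat hadj, ?_⟩
    rw [Walk.length_concat, hw]

/-- general walk: up to base, around, down -/
lemma main_walk (u v : Fin (M + 3) × Fin (n + 1)) :
    ∃ w : (sunletDeg (M + 3) n).Walk u v,
      w.length = u.2.val + dC u.1 v.1 + v.2.val := by
  obtain ⟨q, a⟩ := u
  obtain ⟨i, b⟩ := v
  obtain ⟨w1, hw1⟩ := branch_walk (M := M) (n := n) q 0 a (by simp)
  obtain ⟨w2, hw2⟩ := base_walk (M := M) (n := n) q i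
  obtain ⟨w3, hw3⟩ := branch_walk (M := M) (n := n) i 0 b (by simp)
  refine ⟨(w1.reverse.append w2).append w3, ?_⟩
  simp [Walk.length_append, Walk.length_reverse, hw1, hw2, hw3]

lemma reach (u v : Fin (M + 3) × Fin (n + 1)) : (sunletDeg (M + 3) n).Reachable u v :=
  ⟨(main_walk u v).choose⟩

lemma dist_le_formula (u v : Fin (M + 3) × Fin (n + 1)) :
    (sunletDeg (M + 3) n).dist u v ≤ u.2.val + dC u.1 v.1 + v.2.val := by
  obtain ⟨w, hw⟩ := main_walk u v
  exact hw ▸ SimpleGraph.dist_le w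

lemma dist_branch_le (i : Fin (M + 3)) (a b : Fin (n + 1)) :
    (sunletDeg (M + 3) n).dist (i, a) (i, b) ≤ dabs a.val b.val := by
  rcases Nat.le_total a.val b.val with h | h
  · obtain ⟨w, hw⟩ := branch_walk (M := M) (n := n) i a b h
    have := SimpleGraph.dist_le w
    rw [hw] at this
    unfold dabs; omega
  · obtain ⟨w, hw⟩ := branch_walk (M := M) (n := n) i b a h
    have := SimpleGraph.dist_le w.reverse
    rw [Walk.length_reverse, hw] at this
    unfold dabs; omega

lemma D_base (u : Fin (M + 3) × Fin (n + 1)) (i : Fin (M + 3)) :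
    D u (i, (0 : Fin (n+1))) = u.2.val + dC u.1 i := by
  simp only [D]
  split_ifs with h
  · rw [h, dC_self]
    simp [dabs]
  · rfl

/-- `D` is 1-Lipschitz along edges -/
lemma D_lip (u a b : Fin (M + 3) × Fin (n + 1)) (hadj : (sunletDeg (M + 3) n).Adj a b) :
    D u b ≤ D u a + 1 := by
  rw [sunletDeg, fromRel_adj] at hadj
  obtain ⟨hne, hrel⟩ := hadj
  have key : ∀ x y : Fin (M + 3) × Fin (n + 1),
      (x.2 = 0 ∧ y.2 = 0 ∧ (cycleGraph (M+3)).Adj x.1 y.1 ∨ x.1 = y.1 ∧ x.2.val + 1 = y.2.val) →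
      D u y ≤ D u x + 1 ∧ D u x ≤ D u y + 1 := by
    rintro ⟨xi, xa⟩ ⟨yi, ya⟩ h
    rcases h with ⟨h0x, h0y, hcyc⟩ | ⟨hsame, hstep⟩
    · have hxa : xa = 0 := h0x
      have hya : ya = 0 := h0y
      subst hxa; subst hya
      rw [D_base, D_base]
      have hd : dC xi yi = 1 := (cyc_adj_iff _ _).mp hcyc
      have ht1 := dC_tri u.1 xi yi
      have ht2 := dC_tri u.1 yi xi
      have hc := dC_comm xi yi
      constructor <;> omega
    · have hxy : xi = yi := hsame
      subst hxy
      have hstep' : xa.val + 1 = ya.val := hstep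
      by_cases hu : u.1 = xi
      · simp only [D, if_pos hu]
        unfold dabs
        constructor <;> omega
      · simp only [D, if_neg hu]
        constructor <;> omega
  rcases hrel with h | h
  · exact (key a b h).1
  · exact (key b a h).2

lemma D_le_dist (u v : Fin (M + 3) × Fin (n + 1)) :
    D u v ≤ (sunletDeg (M + 3) n).dist u v := by
  obtain ⟨w, hw⟩ := (reach u v).exists_walk_length_eq_dist
  rw [← hw]
  clear hw
  have gen : ∀ (y : Fin (M + 3) × Fin (n + 1)) (w : (sunletDeg (M + 3) n).Walk u y),
      D u y ≤ w.length := by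
    intro y w
    have gen2 : ∀ (x y : Fin (M + 3) × Fin (n + 1)) (w : (sunletDeg (M + 3) n).Walk x y),
        D u y ≤ D u x + w.length := by
      intro x y w
      induction w with
      | nil => simp
      | @cons c d e hadj p ih =>
        have := D_lip u c d hadj
        simp only [Walk.length_cons]
        omega
    have h0 : D u u = 0 := by simp [D, dabs]
    have := gen2 u y w
    omega
  exact gen v w


/-- Case 1 of the lower bound: some broadcaster reaches a foreign leaf. -/
lemma lower_case1 (hn : 1 ≤ n) (f : Fin (M + 3) × Fin (n + 1) → ℕ)
    (hcov : ∀ v, ∃ u, 1 ≤ f u ∧ D u v ≤ f u)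
    (hC1 : ∃ u, 1 ≤ f u ∧ ∃ i, u.1 ≠ i ∧ u.2.val + n + dC u.1 i ≤ f u) :
    n + (M + 3) / 2 ≤ ∑ v, f v := by
  classical
  obtain ⟨u₀, hu₀1, i₁, hne₁, hcov₁⟩ := hC1
  set leaf : Fin (M + 3) → Fin (M + 3) × Fin (n + 1) := fun i => (i, Fin.last n) with hleaf
  have hP : ∀ i : Fin (M + 3), ∃ u, 1 ≤ f u ∧
      (u.1 = i ∨ u.2.val + n + dC u.1 i ≤ f u) := by
    intro i
    obtain ⟨u, h1, h2⟩ := hcov (leaf i)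
    by_cases he : u.1 = i
    · exact ⟨u, h1, Or.inl he⟩
    · refine ⟨u, h1, Or.inr ?_⟩
      have hD : D u (leaf i) = u.2.val + n + dC u.1 i := by
        simp only [D, hleaf, if_neg he, Fin.val_last]
      omega
  set g : Fin (M + 3) → Fin (M + 3) × Fin (n + 1) :=
    fun i => if i = i₁ ∨ i = u₀.1 then u₀ else (hP i).choose with hgdef
  have hg : ∀ i, 1 ≤ f (g i) ∧ ((g i).1 = i ∨ (g i).2.val + n + dC (g i).1 i ≤ f (g i)) := by
    intro i
    by_cases hi : i = i₁ ∨ i = u₀.1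
    · simp only [hgdef, if_pos hi]
      rcases hi with rfl | rfl
      · exact ⟨hu₀1, Or.inr hcov₁⟩
      · exact ⟨hu₀1, Or.inl rfl⟩
    · simp only [hgdef, if_neg hi]
      exact (hP i).choose_spec
  set T := Finset.image g univ with hT
  -- fiber counting bound
  have hfib : ∀ u ∈ T, (univ.filter (fun i => g i = u)).card + 1 ≤ 2 * f u := by
    intro u hu
    obtain ⟨i₀, _, rfl⟩ := Finset.mem_image.mp hu
    set F := univ.filter (fun i => g i = g i₀) with hF
    by_cases hc : F.card ≤ 1
    · have := (hg i₀).1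
      omega
    · push_neg at hc
      have hforeign : ∃ i ∈ F, (g i₀).1 ≠ i := by
        by_contra hall
        push_neg at hall
        have hsub : F ⊆ {(g i₀).1} := fun x hx => Finset.mem_singleton.mpr (hall x hx).symm
        have := Finset.card_le_card hsub
        simp only [Finset.card_singleton] at this
        omega
      obtain ⟨ifo, hifo, hifne⟩ := hforeign
      have hgi : g ifo = g i₀ := by
        have := (Finset.mem_filter.mp hifo).2
        exact this
      have hbig : (g i₀).2.val + n + 1 ≤ f (g i₀) := by
        have h2 := (hg ifo).2
        rw [hgi] at h2
        rcases h2 with he | hb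
        · exact absurd he hifne
        · have hd0 : dC (g i₀).1 ifo ≠ 0 := by
            intro hz
            exact hifne ((dC_eq_zero_iff _ _).mp hz)
          omega
      have hsubball : F ⊆ univ.filter
          (fun i => dC (g i₀).1 i ≤ f (g i₀) - n - (g i₀).2.val) := by
        intro x hx
        have hgx : g x = g i₀ := (Finset.mem_filter.mp hx).2
        have h2 := (hg x).2
        rw [hgx] at h2
        simp only [Finset.mem_filter, Finset.mem_univ, true_and]
        rcases h2 with he | hb
        · rw [he, dC_self]
          omega
        · omega
      have hball := dC_ball (g i₀).1 (f (g i₀) - n - (g i₀).2.val)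
      have hcard := Finset.card_le_card hsubball
      omega
  have hcardsum : ∑ u ∈ T, (univ.filter (fun i => g i = u)).card = M + 3 := by
    have := Finset.card_eq_sum_card_fiberwise
      (f := g) (s := (univ : Finset (Fin (M + 3)))) (t := T)
      (fun i _ => Finset.mem_image_of_mem g (Finset.mem_univ i))
    simpa using this.symm
  have hu₀T : u₀ ∈ T := by
    have hgi : g i₁ = u₀ := by simp [hgdef]
    exact hgi ▸ Finset.mem_image_of_mem g (Finset.mem_univ i₁)
  have hfib₀ : 2 ≤ (univ.filter (fun i => g i = u₀)).card := by
    have hss : ({i₁, u₀.1} : Finset (Fin (M + 3))) ⊆ univ.filter (fun i => g i = u₀) := by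
      intro x hx
      simp only [Finset.mem_insert, Finset.mem_singleton] at hx
      simp only [Finset.mem_filter, Finset.mem_univ, true_and]
      rcases hx with rfl | rfl <;> simp [hgdef]
    have hcardp := Finset.card_le_card hss
    rwa [Finset.card_pair (Ne.symm hne₁)] at hcardp
  -- extra strength for u₀ : fiber₀ + 2n + 2j - 1 ≤ 2 f u₀
  have hfib₀' : (univ.filter (fun i => g i = u₀)).card + (2 * n - 1) ≤ 2 * f u₀ := by
    have hbig : u₀.2.val + n + 1 ≤ f u₀ := by
      have hd0 : dC u₀.1 i₁ ≠ 0 := by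
        intro hz
        exact hne₁ ((dC_eq_zero_iff _ _).mp hz)
      omega
    have hsubball : univ.filter (fun i => g i = u₀) ⊆ univ.filter
        (fun i => dC u₀.1 i ≤ f u₀ - n - u₀.2.val) := by
      intro x hx
      have hgx : g x = u₀ := (Finset.mem_filter.mp hx).2
      have h2 := (hg x).2
      rw [hgx] at h2
      simp only [Finset.mem_filter, Finset.mem_univ, true_and]
      rcases h2 with he | hb
      · rw [he, dC_self]
        omega
      · omega
    have hball := dC_ball u₀.1 (f u₀ - n - u₀.2.val)
    have hcard := Finset.card_le_card hsubball
    omega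
  -- put it together
  have hsum1 : ∑ u ∈ T, f u ≤ ∑ v, f v := Finset.sum_le_sum_of_subset (Finset.subset_univ T)
  have hsplit : f u₀ + ∑ u ∈ T.erase u₀, f u = ∑ u ∈ T, f u :=
    Finset.add_sum_erase T f hu₀T
  have hsplit2 : (univ.filter (fun i => g i = u₀)).card
      + ∑ u ∈ T.erase u₀, (univ.filter (fun i => g i = u)).card
      = ∑ u ∈ T, (univ.filter (fun i => g i = u)).card :=
    Finset.add_sum_erase T (fun u => (univ.filter (fun i => g i = u)).card) hu₀T
  have herase : ∑ u ∈ T.erase u₀, ((univ.filter (fun i => g i = u)).card + 1)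
      ≤ ∑ u ∈ T.erase u₀, 2 * f u := by
    apply Finset.sum_le_sum
    intro u hu
    exact hfib u (Finset.mem_of_mem_erase hu)
  rw [Finset.sum_add_distrib] at herase
  have hmulsum : ∑ u ∈ T.erase u₀, 2 * f u = 2 * ∑ u ∈ T.erase u₀, f u := by
    rw [Finset.mul_sum]
  rw [hmulsum] at herase
  omega


/-- Case 2 of the lower bound: no broadcaster reaches a foreign leaf. -/
lemma lower_case2 (hn : 1 ≤ n) (f : Fin (M + 3) × Fin (n + 1) → ℕ)
    (hcov : ∀ v, ∃ u, 1 ≤ f u ∧ D u v ≤ f u)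
    (hC1 : ∀ u, 1 ≤ f u → ∀ i, u.1 ≠ i → f u < u.2.val + n + dC u.1 i) :
    n + (M + 3) / 2 ≤ ∑ v, f v := by
  classical
  set leaf : Fin (M + 3) → Fin (M + 3) × Fin (n + 1) := fun i => (i, Fin.last n) with hleaf
  set supp := univ.filter (fun u : Fin (M + 3) × Fin (n + 1) => 1 ≤ f u) with hsuppdef
  have mem_supp : ∀ u, u ∈ supp ↔ 1 ≤ f u := by
    intro u; simp [hsuppdef]
  have hsupp_ne : supp.Nonempty := by
    obtain ⟨u, h1, _⟩ := hcov ((0 : Fin (M + 3)), (0 : Fin (n + 1)))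
    exact ⟨u, (mem_supp u).mpr h1⟩
  set a : Fin (M + 3) → ℤ :=
    fun i => supp.sup' hsupp_ne (fun u => (f u : ℤ) - u.2.val - dC u.1 i) with hadef
  have ha_spec : ∀ i, a i = supp.sup' hsupp_ne (fun u => (f u : ℤ) - u.2.val - dC u.1 i) :=
    fun i => by rw [hadef]
  have ha_mem : ∀ i u, u ∈ supp → (f u : ℤ) - u.2.val - dC u.1 i ≤ a i := by
    intro i u hu
    rw [ha_spec]
    exact Finset.le_sup' (fun u => (f u : ℤ) - u.2.val - dC u.1 i) hu
  have ha_ub : ∀ i, a i ≤ n := by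
    intro i
    rw [ha_spec]
    apply Finset.sup'_le
    intro u hu
    have hu1 : 1 ≤ f u := (mem_supp u).mp hu
    by_cases he : u.1 = i
    · have hne : u.1 ≠ i + 1 := by rw [he]; exact fun hc => succ_ne i hc.symm
      have := hC1 u hu1 (i + 1) hne
      rw [he, dC_succ] at this
      push_cast
      omega
    · have h1 := hC1 u hu1 i he
      have hd0 : dC u.1 i ≠ 0 := fun hz => he ((dC_eq_zero_iff _ _).mp hz)
      push_cast
      omega
  have ha_lb : ∀ i, 0 ≤ a i := by
    intro i
    obtain ⟨u, h1, h2⟩ := hcov (i, (0 : Fin (n + 1)))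
    rw [D_base] at h2
    have hu : u ∈ supp := (mem_supp u).mpr h1
    calc (0 : ℤ) ≤ (f u : ℤ) - u.2.val - dC u.1 i := by push_cast; omega
      _ ≤ a i := ha_mem i u hu
  -- branch decomposition
  set B : Fin (M + 3) → Finset (Fin (M + 3) × Fin (n + 1)) :=
    fun i => supp.filter (fun u => u.1 = i) with hBdef
  set c : Fin (M + 3) → ℕ := fun i => ∑ u ∈ B i, f u with hcdef
  have hc_spec : ∀ i, c i = ∑ u ∈ B i, f u := fun i => by rw [hcdef]
  have hsum_c : ∑ i, c i = ∑ v, f v := by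
    have h1 : ∑ v, f v = ∑ v ∈ supp, f v := by
      symm
      apply Finset.sum_subset (Finset.subset_univ _)
      intro x _ hx
      rw [mem_supp] at hx
      omega
    have h2 : ∑ i, c i = ∑ i : Fin (M + 3), ∑ u ∈ supp.filter (fun u => u.1 = i), f u := by
      apply Finset.sum_congr rfl
      intro i _
      rw [hc_spec, hBdef]
    rw [h1, h2]
    exact Finset.sum_fiberwise_of_maps_to (fun u _ => Finset.mem_univ u.1) f
  have hBmem : ∀ i u, u ∈ B i ↔ (1 ≤ f u ∧ u.1 = i) := by
    intro i u
    rw [hBdef]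
    simp only [Finset.mem_filter]
    rw [mem_supp u]
  -- each branch covers its own leaf
  have hBne : ∀ i, (B i).Nonempty := by
    intro i
    obtain ⟨u, h1, h2⟩ := hcov (leaf i)
    by_cases he : u.1 = i
    · exact ⟨u, (hBmem i u).mpr ⟨h1, he⟩⟩
    · exfalso
      have hD : D u (leaf i) = u.2.val + n + dC u.1 i := by
        simp only [D, hleaf, if_neg he, Fin.val_last]
      rw [hD] at h2
      have := hC1 u h1 i he
      omega
  have hc1 : ∀ i, 1 ≤ c i := by
    intro i
    obtain ⟨u, hu⟩ := hBne i
    have h1 : 1 ≤ f u := ((hBmem i u).mp hu).1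
    rw [hc_spec]
    calc 1 ≤ f u := h1
      _ ≤ ∑ u ∈ B i, f u := Finset.single_le_sum (fun x _ => Nat.zero_le (f x)) hu
  have hcardB : ∀ i, (B i).card ≤ c i := by
    intro i
    rw [hc_spec]
    calc (B i).card = ∑ _u ∈ B i, 1 := by simp
      _ ≤ ∑ u ∈ B i, f u := Finset.sum_le_sum (fun u hu => ((hBmem i u).mp hu).1)
  -- counting lemma (1)
  have hL1 : ∀ i, (n : ℤ) ≤ 3 * c i + a i := by
    intro i
    have hsub : Finset.Icc (a i + 1) (n : ℤ) ⊆
        (B i).biUnion (fun u => Finset.Icc ((u.2.val : ℤ) - f u) ((u.2.val : ℤ) + f u)) := by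
      intro x hx
      rw [Finset.mem_Icc] at hx
      have hx0 : 0 ≤ x := le_trans (ha_lb i) (by omega)
      have hxlt : x.toNat < n + 1 := by omega
      obtain ⟨u, h1, h2⟩ := hcov (i, ⟨x.toNat, hxlt⟩)
      have husupp : u ∈ supp := (mem_supp u).mpr h1
      by_cases he : u.1 = i
      · rw [Finset.mem_biUnion]
        refine ⟨u, (hBmem i u).mpr ⟨h1, he⟩, ?_⟩
        rw [Finset.mem_Icc]
        have hD : D u (i, ⟨x.toNat, hxlt⟩) = dabs u.2.val x.toNat := by
          simp only [D, if_pos he]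
        rw [hD] at h2
        unfold dabs at h2
        push_cast
        omega
      · exfalso
        have hD : D u (i, ⟨x.toNat, hxlt⟩) = u.2.val + x.toNat + dC u.1 i := by
          simp only [D, if_neg he]
        rw [hD] at h2
        have hmem := ha_mem i u husupp
        have : (x : ℤ) ≤ a i := by push_cast at hmem ⊢; omega
        omega
    have hcard := Finset.card_le_card hsub
    have hcard2 := le_trans hcard (Finset.card_biUnion_le)
    have hIcc : (Finset.Icc (a i + 1) (n : ℤ)).card = ((n : ℤ) - a i).toNat := by
      rw [Int.card_Icc]
      congr 1
      ring
    have hIccsum : ∑ u ∈ B i, (Finset.Icc ((u.2.val : ℤ) - f u) ((u.2.val : ℤ) + f u)).card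
        = ∑ u ∈ B i, (2 * f u + 1) := by
      apply Finset.sum_congr rfl
      intro u _
      rw [Int.card_Icc]
      omega
    rw [hIcc, hIccsum] at hcard2
    have hsum23 : ∑ u ∈ B i, (2 * f u + 1) = 2 * (∑ u ∈ B i, f u) + (B i).card := by
      rw [Finset.sum_add_distrib, ← Finset.mul_sum]
      simp
    rw [hsum23] at hcard2
    have hub := ha_ub i
    have hlb := ha_lb i
    have hcB := hcardB i
    rw [hc_spec] at hcB ⊢
    omega
  -- local maxima
  set lm : Fin (M + 3) → Prop := fun p => ∀ p', dC p p' = 1 → a p' ≤ a p with hlmdef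
  have hlm_spec : ∀ p, lm p ↔ (∀ p', dC p p' = 1 → a p' ≤ a p) := fun p => by rw [hlmdef]
  have hflb : ∀ p, lm p → ∀ u, u ∈ supp → u.1 ≠ p →
      (f u : ℤ) - u.2.val - dC u.1 p ≤ a p - 1 := by
    intro p hp u hu hne
    obtain ⟨p', h1, h2⟩ := dC_step u.1 p hne
    have hm1 := ha_mem p' u hu
    have hm2 := (hlm_spec p).mp hp p' h1
    have hcast : (dC u.1 p' : ℤ) + 1 = dC u.1 p := by exact_mod_cast h2
    omega
  have hattain : ∀ p, lm p → ∃ w ∈ B p, (f w : ℤ) = w.2.val + a p := by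
    intro p hp
    obtain ⟨w, hw, hweq⟩ := Finset.exists_mem_eq_sup' hsupp_ne
      (fun u => (f u : ℤ) - u.2.val - dC u.1 p)
    by_cases he : w.1 = p
    · refine ⟨w, (hBmem p w).mpr ⟨(mem_supp w).mp hw, he⟩, ?_⟩
      have hd : dC w.1 p = 0 := by rw [he, dC_self]
      have h2 : a p = (f w : ℤ) - w.2.val - dC w.1 p := by rw [ha_spec]; exact hweq
      rw [hd] at h2
      push_cast at h2 ⊢
      omega
    · exfalso
      have h1 := hflb p hp w hw he
      have h2 : a p = (f w : ℤ) - w.2.val - dC w.1 p := by rw [ha_spec]; exact hweq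
      omega
  -- counting lemma (2) at local maxima
  have hL2 : ∀ p, lm p → ((n : ℤ) + 2 * a p ≤ 3 * c p ∧ (n : ℤ) + a p + 1 ≤ 3 * c p) := by
    intro p hp
    obtain ⟨w, hwB, hwa⟩ := hattain p hp
    have hwsupp : w ∈ supp := (mem_supp w).mpr ((hBmem p w).mp hwB).1
    have hsub : Finset.Icc (a p) (n : ℤ) ⊆
        (Finset.Icc ((a p : ℤ)) (2 * (w.2.val : ℤ) + a p)) ∪
        ((B p).erase w).biUnion
          (fun u => Finset.Icc ((u.2.val : ℤ) - f u) ((u.2.val : ℤ) + f u)) := by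
      intro x hx
      rw [Finset.mem_Icc] at hx
      have hx0 : 0 ≤ x := le_trans (ha_lb p) hx.1
      have hxlt : x.toNat < n + 1 := by omega
      obtain ⟨u, h1, h2⟩ := hcov (p, ⟨x.toNat, hxlt⟩)
      have husupp : u ∈ supp := (mem_supp u).mpr h1
      by_cases he : u.1 = p
      · by_cases hew : u = w
        · subst hew
          rw [Finset.mem_union, Finset.mem_Icc]
          left
          have hD : D u (p, ⟨x.toNat, hxlt⟩) = dabs u.2.val x.toNat := by
            simp only [D, if_pos he]
          rw [hD] at h2
          unfold dabs at h2
          refine ⟨hx.1, ?_⟩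
          push_cast at hwa ⊢
          omega
        · rw [Finset.mem_union, Finset.mem_biUnion]
          right
          refine ⟨u, Finset.mem_erase.mpr ⟨hew, (hBmem p u).mpr ⟨h1, he⟩⟩, ?_⟩
          rw [Finset.mem_Icc]
          have hD : D u (p, ⟨x.toNat, hxlt⟩) = dabs u.2.val x.toNat := by
            simp only [D, if_pos he]
          rw [hD] at h2
          unfold dabs at h2
          push_cast
          omega
      · exfalso
        have hD : D u (p, ⟨x.toNat, hxlt⟩) = u.2.val + x.toNat + dC u.1 p := by
          simp only [D, if_neg he]
        rw [hD] at h2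
        have hfor := hflb p hp u husupp he
        have hxa : (x : ℤ) ≤ a p - 1 := by push_cast at hfor ⊢; omega
        omega
    have hcard := Finset.card_le_card hsub
    have hcard2 := le_trans hcard (le_trans (Finset.card_union_le _ _)
      (Nat.add_le_add_left (Finset.card_biUnion_le) _))
    have hIcc : (Finset.Icc (a p) (n : ℤ)).card = ((n : ℤ) - a p + 1).toNat := by
      rw [Int.card_Icc]
      congr 1
      ring
    have hIccw : (Finset.Icc ((a p : ℤ)) (2 * (w.2.val : ℤ) + a p)).card
        = 2 * w.2.val + 1 := by
      rw [Int.card_Icc]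
      omega
    have hIccsum : ∑ u ∈ (B p).erase w,
        (Finset.Icc ((u.2.val : ℤ) - f u) ((u.2.val : ℤ) + f u)).card
        = ∑ u ∈ (B p).erase w, (2 * f u + 1) := by
      apply Finset.sum_congr rfl
      intro u _
      rw [Int.card_Icc]
      omega
    rw [hIcc, hIccw, hIccsum] at hcard2
    have hsplitsum : f w + ∑ u ∈ (B p).erase w, f u = ∑ u ∈ B p, f u :=
      Finset.add_sum_erase _ f hwB
    have hcarderase : ((B p).erase w).card + 1 = (B p).card := by
      rw [Finset.card_erase_of_mem hwB]
      have : 1 ≤ (B p).card := Finset.card_pos.mpr ⟨w, hwB⟩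
      omega
    have hsum23 : ∑ u ∈ (B p).erase w, (2 * f u + 1)
        = 2 * (∑ u ∈ (B p).erase w, f u) + ((B p).erase w).card := by
      rw [Finset.sum_add_distrib, ← Finset.mul_sum]
      simp
    rw [hsum23] at hcard2
    have hcarder : ((B p).erase w).card ≤ ∑ u ∈ (B p).erase w, f u := by
      calc ((B p).erase w).card = ∑ _u ∈ (B p).erase w, 1 := by simp
        _ ≤ _ := Finset.sum_le_sum
            (fun u hu => ((hBmem p u).mp (Finset.mem_of_mem_erase hu)).1)
    have hcB := hcardB p
    have hub := ha_ub p
    have hlb := ha_lb p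
    have hwf : 1 ≤ f w := ((hBmem p w).mp hwB).1
    rw [hc_spec] at hcB ⊢
    constructor <;> omega
  -- global maximum
  obtain ⟨pstar, _, hmax⟩ := Finset.exists_max_image (univ : Finset (Fin (M + 3))) a
    ⟨0, Finset.mem_univ 0⟩
  have hmax' : ∀ i, a i ≤ a pstar := fun i => hmax i (Finset.mem_univ i)
  have hlmstar : lm pstar := (hlm_spec pstar).mpr (fun p' _ => hmax' p')
  have hKn : a pstar ≤ n := ha_ub pstar
  have hK0 : 0 ≤ a pstar := ha_lb pstar
  by_cases hKbig : (n : ℤ) - 2 ≤ a pstar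
  · -- Case A
    have h2a := (hL2 pstar hlmstar).1
    have hcpstar : (n : ℤ) - 1 ≤ c pstar := by omega
    have hsplitsum : c pstar + ∑ i ∈ univ.erase pstar, c i = ∑ i, c i :=
      Finset.add_sum_erase _ c (Finset.mem_univ pstar)
    have hrest : M + 2 ≤ ∑ i ∈ univ.erase pstar, c i := by
      have hcard : (univ.erase pstar).card = M + 2 := by
        rw [Finset.card_erase_of_mem (Finset.mem_univ pstar)]
        simp
      calc M + 2 = ∑ _i ∈ univ.erase pstar, 1 := by rw [Finset.sum_const, hcard]; simp
        _ ≤ ∑ i ∈ univ.erase pstar, c i := Finset.sum_le_sum (fun i _ => hc1 i)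
    rw [← hsum_c]
    omega
  · -- Case B
    push_neg at hKbig
    rw [← hsum_c]
    by_cases hK0' : a pstar ≤ 0
    · -- all a i = 0
      have hall : ∀ i, a i = 0 := fun i => le_antisymm (le_trans (hmax' i) hK0') (ha_lb i)
      have hlmall : ∀ i, lm i := by
        intro i
        rw [hlm_spec]
        intro p' _
        rw [hall, hall]
      have hbound : ∀ i, (n : ℤ) + 1 ≤ 3 * c i := by
        intro i
        have h := (hL2 i (hlmall i)).2
        rw [hall i] at h
        omega
      have hsum : ((M : ℤ) + 3) * ((n : ℤ) + 1) ≤ 3 * ∑ i, (c i : ℤ) := by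
        calc ((M : ℤ) + 3) * ((n : ℤ) + 1) = ∑ _i : Fin (M + 3), ((n : ℤ) + 1) := by
              rw [Finset.sum_const]
              simp
          _ ≤ ∑ i, 3 * (c i : ℤ) := Finset.sum_le_sum (fun i _ => hbound i)
          _ = 3 * ∑ i, (c i : ℤ) := by rw [← Finset.mul_sum]
      have hn3 : 3 ≤ n := by omega
      have homega : 3 * (((M + 3) / 2 : ℕ) : ℤ) ≤ 4 * (M : ℤ) + 5 := by
        have : 2 * ((M + 3) / 2) ≤ M + 3 := by omega
        push_cast
        omega
      have hM0 : (0 : ℤ) ≤ (M : ℤ) := by positivity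
      have hkey : 3 * (n : ℤ) + 3 * (((M + 3) / 2 : ℕ) : ℤ) - 2 ≤ 3 * ∑ i, (c i : ℤ) := by
        nlinarith [mul_nonneg hM0 (by push_cast; omega : (0:ℤ) ≤ (n : ℤ) - 3)]
      have hcast : ∑ i, (c i : ℤ) = ((∑ i, c i : ℕ) : ℤ) := by push_cast; rfl
      rw [hcast] at hkey
      omega
    · -- 1 ≤ K
      push_neg at hK0'
      set P := univ.filter (fun p => lm p) with hPdef
      have hPstar : pstar ∈ P := by
        rw [hPdef, Finset.mem_filter]
        exact ⟨Finset.mem_univ _, hlmstar⟩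
      have hr1 : 1 ≤ P.card := Finset.card_pos.mpr ⟨pstar, hPstar⟩
      have hrm : P.card ≤ M + 3 := by
        calc P.card ≤ (univ : Finset (Fin (M + 3))).card :=
              Finset.card_le_card (Finset.filter_subset _ _)
          _ = M + 3 := by simp
      -- sum over P
      have hsumP : (P.card : ℤ) * n + 2 * a pstar ≤ ∑ p ∈ P, 3 * (c p : ℤ) := by
        have hsplitP : ((n : ℤ) + 2 * a pstar) + ∑ p ∈ P.erase pstar, ((n : ℤ) + 2 * a p)
            = ∑ p ∈ P, ((n : ℤ) + 2 * a p) :=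
          Finset.add_sum_erase _ (fun p => (n : ℤ) + 2 * a p) hPstar
        have hlow : ∀ p ∈ P.erase pstar, (n : ℤ) ≤ (n : ℤ) + 2 * a p := by
          intro p _
          have := ha_lb p
          omega
        have hlow2 : ((P.erase pstar).card : ℤ) * n ≤ ∑ p ∈ P.erase pstar, ((n : ℤ) + 2 * a p) := by
          calc ((P.erase pstar).card : ℤ) * n = ∑ _p ∈ P.erase pstar, (n : ℤ) := by
                rw [Finset.sum_const]; push_cast; ring
            _ ≤ _ := Finset.sum_le_sum hlow
        have hterm : ∀ p ∈ P, (n : ℤ) + 2 * a p ≤ 3 * c p := by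
          intro p hp
          exact (hL2 p ((Finset.mem_filter.mp hp).2)).1
        have hce : (P.erase pstar).card + 1 = P.card := by
          rw [Finset.card_erase_of_mem hPstar]
          omega
        calc (P.card : ℤ) * n + 2 * a pstar
            ≤ ((n : ℤ) + 2 * a pstar) + ∑ p ∈ P.erase pstar, ((n : ℤ) + 2 * a p) := by
              have : ((P.card : ℤ)) * n = (n : ℤ) + ((P.erase pstar).card : ℤ) * n := by
                rw [← hce]; push_cast; ring
              omega
          _ = ∑ p ∈ P, ((n : ℤ) + 2 * a p) := hsplitP
          _ ≤ ∑ p ∈ P, 3 * (c p : ℤ) := Finset.sum_le_sum hterm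
      -- sum over complement
      set Q := univ.filter (fun p => ¬ lm p) with hQdef
      have hQcard : P.card + Q.card = M + 3 := by
        rw [hPdef, hQdef]
        rw [Finset.card_filter_add_card_filter_not]
        simp
      have hQa : ∀ i ∈ Q, a i ≤ a pstar - 1 := by
        intro i hi
        rw [hQdef, Finset.mem_filter] at hi
        by_contra hcon
        push_neg at hcon
        have heq : a i = a pstar := le_antisymm (hmax' i) (by omega)
        apply hi.2
        rw [hlm_spec]
        intro p' _
        rw [heq]
        exact hmax' p'
      have hsumQ : (Q.card : ℤ) * ((n : ℤ) - a pstar + 1) ≤ ∑ p ∈ Q, 3 * (c p : ℤ) := by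
        have hterm : ∀ p ∈ Q, (n : ℤ) - a pstar + 1 ≤ 3 * c p := by
          intro p hp
          have h1 := hL1 p
          have h2 := hQa p hp
          omega
        calc (Q.card : ℤ) * ((n : ℤ) - a pstar + 1) = ∑ _p ∈ Q, ((n : ℤ) - a pstar + 1) := by
              rw [Finset.sum_const]; push_cast; ring
          _ ≤ _ := Finset.sum_le_sum hterm
      have hPQ : ∑ p ∈ P, 3 * (c p : ℤ) + ∑ p ∈ Q, 3 * (c p : ℤ) = 3 * ∑ i, (c i : ℤ) := by
        rw [hPdef, hQdef]
        rw [Finset.sum_filter_add_sum_filter_not]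
        rw [← Finset.mul_sum]
      -- final arithmetic
      have homega : (0 : ℤ) ≤ 4 * ((M : ℤ) + 3) - 3 * (((M + 3) / 2 : ℕ) : ℤ) - 8 := by
        have : 2 * ((M + 3) / 2) ≤ M + 3 := by omega
        push_cast
        omega
      have hM0 : (0 : ℤ) ≤ (M : ℤ) := by positivity
      have hkey : 3 * (n : ℤ) + 3 * (((M + 3) / 2 : ℕ) : ℤ) - 2 ≤ 3 * ∑ i, (c i : ℤ) := by
        have e1 : (0 : ℤ) ≤ ((P.card : ℤ) - 1) * (a pstar - 1) := by
          apply mul_nonneg <;> push_cast <;> omega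
        have e2 : (0 : ℤ) ≤ ((M : ℤ) + 3 - P.card) * ((n : ℤ) - 3 - a pstar) := by
          apply mul_nonneg <;> push_cast <;> omega
        have e3 : (0 : ℤ) ≤ (M : ℤ) * ((n : ℤ) - 3 - a pstar) := by
          apply mul_nonneg
          · exact hM0
          · omega
        have hQc : (Q.card : ℤ) = (M : ℤ) + 3 - P.card := by push_cast; omega
        rw [hQc] at hsumQ
        nlinarith [hsumP, hsumQ, hPQ]
      have hcast : ∑ i, (c i : ℤ) = ((∑ i, c i : ℕ) : ℤ) := by push_cast; rfl
      rw [hcast] at hkey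
      omega



/-- the single central broadcast -/
lemma upper_bound (hn : 1 ≤ n) :
    ∃ f : Fin (M + 3) × Fin (n + 1) → ℕ,
      IsDominatingBroadcast (sunletDeg (M + 3) n) f ∧ ∑ v, f v = n + (M + 3) / 2 := by
  classical
  set v₀ : Fin (M + 3) × Fin (n + 1) := ((0 : Fin (M + 3)), (0 : Fin (n + 1))) with hv₀
  refine ⟨fun v => if v = v₀ then n + (M + 3) / 2 else 0, ?_, ?_⟩
  · intro v
    refine ⟨v₀, ?_, ?_⟩
    · show 1 ≤ if v₀ = v₀ then n + (M + 3) / 2 else 0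
      rw [if_pos rfl]
      omega
    · show (sunletDeg (M + 3) n).dist v₀ v ≤ if v₀ = v₀ then n + (M + 3) / 2 else 0
      rw [if_pos rfl]
      calc (sunletDeg (M + 3) n).dist v₀ v ≤ (0:ℕ) + dC v₀.1 v.1 + v.2.val := by
            have := dist_le_formula v₀ v
            simpa [hv₀] using this
        _ ≤ n + (M + 3) / 2 := by
            have h1 := dC_le_half v₀.1 v.1
            have h2 : v.2.val ≤ n := by omega
            omega
  · rw [Finset.sum_ite_eq' univ v₀ (fun _ => n + (M + 3) / 2)]
    simp

lemma lower_main (hn : 1 ≤ n) (f : Fin (M + 3) × Fin (n + 1) → ℕ)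
    (hf : IsDominatingBroadcast (sunletDeg (M + 3) n) f) :
    n + (M + 3) / 2 ≤ ∑ v, f v := by
  have hcov : ∀ v, ∃ u, 1 ≤ f u ∧ D u v ≤ f u := by
    intro v
    obtain ⟨u, h1, h2⟩ := hf v
    exact ⟨u, h1, le_trans (D_le_dist u v) h2⟩
  by_cases hC1 : ∃ u, 1 ≤ f u ∧ ∃ i, u.1 ≠ i ∧ u.2.val + n + dC u.1 i ≤ f u
  · exact lower_case1 hn f hcov hC1
  · push_neg at hC1
    exact lower_case2 hn f hcov hC1

end SP

/-- For all natural numbers `n ≥ 1` and `m ≥ 3`, the broadcast domination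
number of the sunlet graph with degree `n`, `S_m^n`, equals `n + ⌊m/2⌋`. -/
theorem gammaB_sunletDeg (m n : ℕ) (hm : 3 ≤ m) (hn : 1 ≤ n) :
    gammaB (Fin m × Fin (n + 1)) (sunletDeg m n) = n + m / 2 := by
  obtain ⟨M, rfl⟩ : ∃ M, m = M + 3 := ⟨m - 3, by omega⟩
  obtain ⟨f₀, hdom, hsum⟩ := SP.upper_bound (M := M) (n := n) hn
  have hmem : (n + (M + 3) / 2) ∈
      {c : ℕ | ∃ f : Fin (M + 3) × Fin (n + 1) → ℕ,
        IsDominatingBroadcast (sunletDeg (M + 3) n) f ∧ ∑ v, f v = c} :=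
    ⟨f₀, hdom, hsum⟩
  rw [gammaB]
  apply le_antisymm
  · exact Nat.sInf_le hmem
  · apply le_csInf ⟨_, hmem⟩
    rintro c ⟨f, hf, rfl⟩
    exact SP.lower_main hn f hf
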